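/- For fixed mean μ and threshold t, the expected improvement EI(μ, s, t) = (μ − t)Φ((μ − t)/s) + s·φ((μ − t)/s) is monotonically increasing in s > 0. -/

import Mathlib

open ProbabilityTheory MeasureTheory

noncomputable def stdNormalCDF : ℝ → ℝ := fun x => ProbabilityTheory.cdf (gaussianReal 0 1) x
noncomputable def stdNormalPDF : ℝ → ℝ := gaussianPDFReal 0 1

/-- Closed-form Gaussian expected improvement. -/
noncomputable def EI (μ s t : ℝ) : ℝ :=
  (μ - t) * stdNormalCDF ((μ - t) / s) + s * stdNormalPDF ((μ - t) / s)

lemma stdNormalCDF_eq (x : ℝ) : stdNormalCDF x = ∫ y in Set.Iic x, stdNormalPDF y := by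
  rw [stdNormalCDF, ProbabilityTheory.cdf_eq_real, measureReal_def,
    gaussianReal_apply_eq_integral 0 one_ne_zero (Set.Iic x),
    ENNReal.toReal_ofReal
      (setIntegral_nonneg measurableSet_Iic fun y _ => gaussianPDFReal_nonneg 0 1 y)]
  rfl

lemma continuous_stdNormalPDF : Continuous stdNormalPDF := by
  unfold stdNormalPDF gaussianPDFReal
  fun_prop

lemma hasDerivAt_stdNormalCDF (x : ℝ) : HasDerivAt stdNormalCDF (stdNormalPDF x) x := by
  have hint : Integrable stdNormalPDF := integrable_gaussianPDFReal 0 1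
  have heq : ∀ y : ℝ, stdNormalCDF y = (∫ z in Set.Iic (0:ℝ), stdNormalPDF z)
      + ∫ z in (0:ℝ)..y, stdNormalPDF z := by
    intro y
    rw [stdNormalCDF_eq, ← intervalIntegral.integral_Iic_sub_Iic hint.integrableOn
      hint.integrableOn]
    ring
  have h := intervalIntegral.integral_hasDerivAt_right
    (hint.intervalIntegrable (a := 0) (b := x))
    (continuous_stdNormalPDF.stronglyMeasurableAtFilter _ _)
    continuous_stdNormalPDF.continuousAt
  have h2 := h.const_add (∫ z in Set.Iic (0:ℝ), stdNormalPDF z)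
  exact h2.congr_of_eventuallyEq (Filter.Eventually.of_forall fun y => (heq y))

lemma hasDerivAt_stdNormalPDF (x : ℝ) :
    HasDerivAt stdNormalPDF (-x * stdNormalPDF x) x := by
  have hpdf : ∀ y : ℝ, stdNormalPDF y = (Real.sqrt (2 * Real.pi))⁻¹ * Real.exp (-(y ^ 2) / 2) := by
    intro y
    simp [stdNormalPDF, gaussianPDFReal]
  have h1 : HasDerivAt (fun y : ℝ => -(y ^ 2) / 2) (-x) x := by
    have := ((hasDerivAt_pow 2 x).neg).div_const 2
    simpa using this.congr_deriv (by ring)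
  have hfun : stdNormalPDF = fun y : ℝ => (Real.sqrt (2 * Real.pi))⁻¹ * Real.exp (-(y ^ 2) / 2) :=
    funext hpdf
  rw [hfun]
  have h2 := (h1.exp).const_mul (Real.sqrt (2 * Real.pi))⁻¹
  refine h2.congr_deriv ?_
  rw [Real.exp_eq_exp.mpr rfl]
  ring

lemma hasDerivAt_EI (μ t : ℝ) {s : ℝ} (hs : 0 < s) :
    HasDerivAt (fun s => EI μ s t) (stdNormalPDF ((μ - t) / s)) s := by
  set a := μ - t
  have hs' : s ≠ 0 := ne_of_gt hs
  have hu : HasDerivAt (fun s : ℝ => a / s) (-a / s ^ 2) s := by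
    have := (hasDerivAt_inv hs').const_mul a
    simp only [div_eq_mul_inv]
    refine this.congr_deriv ?_
    field_simp
  have hcdf := (hasDerivAt_stdNormalCDF (a / s)).comp s hu
  have hpdf := (hasDerivAt_stdNormalPDF (a / s)).comp s hu
  have h1 := hcdf.const_mul a
  have h2 := (hasDerivAt_id s).mul hpdf
  have h := h1.add h2
  refine h.congr_deriv ?_
  simp only [Function.comp_apply, id]
  field_simp
  ring

/-- For fixed mean `μ` and threshold `t`, the expected improvement is monotonically
increasing in the standard deviation `s > 0`. -/
theorem EI_mono_stddev (μ t : ℝ) :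
    ∀ ⦃s₁ s₂ : ℝ⦄, 0 < s₁ → s₁ ≤ s₂ → EI μ s₁ t ≤ EI μ s₂ t := by
  intro s₁ s₂ h1 h12
  have hmono : StrictMonoOn (fun s => EI μ s t) (Set.Ioi 0) := by
    apply strictMonoOn_of_deriv_pos (convex_Ioi 0)
    · intro s hs
      exact (hasDerivAt_EI μ t hs).continuousAt.continuousWithinAt
    · intro s hs
      rw [interior_Ioi] at hs
      rw [(hasDerivAt_EI μ t hs).deriv]
      exact gaussianPDFReal_pos 0 1 _ (by norm_num)
  exact hmono.monotoneOn (Set.mem_Ioi.mpr h1) (Set.mem_Ioi.mpr (lt_of_lt_of_le h1 h12)) h12
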